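/- Let H be a finite-dimensional Hopf algebra over a field k and τ a Hopf algebra automorphism of H of finite order r. Then the twisted exponent of the dual Hopf algebra H* with respect to the dual automorphism τ* (the transpose of τ) equals exp_τ(H): exp_{τ*}(H*) = exp_τ(H). -/

import Mathlib

open scoped TensorProduct

noncomputable section

namespace TwistedExponent

variable (k H : Type*) [CommRing k] [Ring H] [HopfAlgebra k H]

/-- The convolution product of two linear endomorphisms of a bialgebra:
`f * g = μ ∘ (f ⊗ g) ∘ Δ`. -/
def conv (f g : H →ₗ[k] H) : H →ₗ[k] H :=
  LinearMap.mul' k H ∘ₗ TensorProduct.map f g ∘ₗ Coalgebra.comul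

/-- The convolution unit `η ∘ ε`, i.e. `h ↦ ε(h)·1`. -/
def convOne : H →ₗ[k] H := Algebra.linearMap k H ∘ₗ Coalgebra.counit

/-- `gamma T m` is the map `Γ_m = μ^m ∘ (Id ⊗ T ⊗ T² ⊗ ⋯ ⊗ T^{m-1}) ∘ Δ^{m-1}`, expressed as
the convolution product `Id * T * T² * ⋯ * T^{m-1}` (with `gamma T 0` the convolution unit). -/
def gamma (T : H →ₗ[k] H) : ℕ → (H →ₗ[k] H)
  | 0 => convOne k H
  | (m + 1) => conv k H (gamma T m) (T ^ m)

/-- The inverse of the antipode, given that the antipode is bijective. -/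
def antipodeInv (hS : Function.Bijective (HopfAlgebra.antipode (R := k) (A := H))) :
    H →ₗ[k] H :=
  (LinearEquiv.ofBijective (HopfAlgebra.antipode (R := k) (A := H)) hS).symm

/-- The map `S⁻² ∘ τ`. -/
def twist (hS : Function.Bijective (HopfAlgebra.antipode (R := k) (A := H)))
    (τ : H →ₗ[k] H) : H →ₗ[k] H :=
  antipodeInv k H hS ∘ₗ antipodeInv k H hS ∘ₗ τ

/-- `f : H → H` has exact (finite) order `r`. -/
def HasOrder (τ : H → H) (r : ℕ) : Prop :=
  0 < r ∧ τ^[r] = id ∧ ∀ s : ℕ, 0 < s → s < r → τ^[s] ≠ id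

end TwistedExponent

open TwistedExponent

namespace TwistedExponent

/-! ### Auxiliary lemmas on the convolution product -/

section ConvLemmas

variable {k H : Type*} [CommRing k] [Ring H] [HopfAlgebra k H]

lemma conv_apply (f g : H →ₗ[k] H) (a : H) :
    conv k H f g a = LinearMap.mul' k H (TensorProduct.map f g (Coalgebra.comul a)) := rfl

lemma convOne_apply (a : H) :
    convOne k H a = algebraMap k H (Coalgebra.counit (R := k) a) := rfl

lemma conv_convOne (f : H →ₗ[k] H) : conv k H f (convOne k H) = f := by
  ext a
  have hdec : TensorProduct.map f (convOne k H)
      = TensorProduct.map f (Algebra.linearMap k H) ∘ₗ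
        LinearMap.lTensor H (Coalgebra.counit (R := k) (A := H)) := by
    simp only [LinearMap.lTensor, ← TensorProduct.map_comp, LinearMap.comp_id]
    rfl
  rw [conv_apply, hdec, LinearMap.comp_apply, Coalgebra.lTensor_counit_comul]
  simp

lemma convOne_conv (f : H →ₗ[k] H) : conv k H (convOne k H) f = f := by
  ext a
  have hdec : TensorProduct.map (convOne k H) f
      = TensorProduct.map (Algebra.linearMap k H) f ∘ₗ
        LinearMap.rTensor H (Coalgebra.counit (R := k) (A := H)) := by
    simp only [LinearMap.rTensor, ← TensorProduct.map_comp, LinearMap.comp_id]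
    rfl
  rw [conv_apply, hdec, LinearMap.comp_apply, Coalgebra.rTensor_counit_comul]
  simp

lemma mul'_map_assoc :
    (LinearMap.mul' k H) ∘ₗ LinearMap.rTensor H (LinearMap.mul' k H)
      = (LinearMap.mul' k H) ∘ₗ LinearMap.lTensor H (LinearMap.mul' k H) ∘ₗ
          (TensorProduct.assoc k H H H).toLinearMap := by
  apply TensorProduct.ext_threefold
  intro x y z
  simp [mul_assoc]

lemma conv_assoc (f g h : H →ₗ[k] H) :
    conv k H (conv k H f g) h = conv k H f (conv k H g h) := by
  have d1 : TensorProduct.map (conv k H f g) h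
      = LinearMap.rTensor H (LinearMap.mul' k H) ∘ₗ
          (LinearMap.rTensor H (TensorProduct.map f g) ∘ₗ
            TensorProduct.map (Coalgebra.comul (R := k) (A := H)) h) := by
    simp only [LinearMap.rTensor, ← TensorProduct.map_comp, LinearMap.id_comp]
    rfl
  have d2 : TensorProduct.map f (conv k H g h)
      = LinearMap.lTensor H (LinearMap.mul' k H) ∘ₗ
          (LinearMap.lTensor H (TensorProduct.map g h) ∘ₗ
            TensorProduct.map f (Coalgebra.comul (R := k) (A := H))) := by
    simp only [LinearMap.lTensor, ← TensorProduct.map_comp, LinearMap.id_comp]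
    rfl
  have e1 : LinearMap.rTensor H (TensorProduct.map f g) ∘ₗ
        TensorProduct.map (Coalgebra.comul (R := k) (A := H)) h
      = TensorProduct.map (TensorProduct.map f g) h ∘ₗ
          LinearMap.rTensor H (Coalgebra.comul (R := k) (A := H)) := by
    simp only [LinearMap.rTensor, ← TensorProduct.map_comp, LinearMap.id_comp,
      LinearMap.comp_id]
  have e2 : LinearMap.lTensor H (TensorProduct.map g h) ∘ₗ
        TensorProduct.map f (Coalgebra.comul (R := k) (A := H))
      = TensorProduct.map f (TensorProduct.map g h) ∘ₗ
          LinearMap.lTensor H (Coalgebra.comul (R := k) (A := H)) := by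
    simp only [LinearMap.lTensor, ← TensorProduct.map_comp, LinearMap.id_comp,
      LinearMap.comp_id]
  ext a
  rw [conv_apply, conv_apply, d1, d2, e1, e2]
  simp only [LinearMap.comp_apply]
  have key := LinearMap.congr_fun mul'_map_assoc (TensorProduct.map (TensorProduct.map f g) h
      (LinearMap.rTensor H (Coalgebra.comul (R := k) (A := H)) (Coalgebra.comul a)))
  simp only [LinearMap.comp_apply, LinearEquiv.coe_coe] at key
  rw [key, ← TensorProduct.map_map_assoc, Coalgebra.coassoc_apply]

lemma conv_unique {a b c : H →ₗ[k] H} (h1 : conv k H a b = convOne k H)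
    (h2 : conv k H b c = convOne k H) : a = c := by
  have h := conv_assoc a b c
  rw [h1, h2, conv_convOne, convOne_conv] at h
  exact h.symm

lemma conv_antipode_id :
    conv k H (HopfAlgebra.antipode (R := k) (A := H)) LinearMap.id = convOne k H := by
  have h := HopfAlgebra.mul_antipode_rTensor_comul (R := k) (A := H)
  unfold conv convOne
  rw [← h]
  rfl

lemma conv_id_antipode :
    conv k H LinearMap.id (HopfAlgebra.antipode (R := k) (A := H)) = convOne k H := by
  have h := HopfAlgebra.mul_antipode_lTensor_comul (R := k) (A := H)
  unfold conv convOne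
  rw [← h]
  rfl

lemma antipodeInv_comp (hS : Function.Bijective (HopfAlgebra.antipode (R := k) (A := H))) :
    antipodeInv k H hS ∘ₗ HopfAlgebra.antipode (R := k) (A := H) = LinearMap.id := by
  ext x
  exact (LinearEquiv.ofBijective _ hS).symm_apply_apply x

lemma comp_antipodeInv (hS : Function.Bijective (HopfAlgebra.antipode (R := k) (A := H))) :
    HopfAlgebra.antipode (R := k) (A := H) ∘ₗ antipodeInv k H hS = LinearMap.id := by
  ext x
  exact (LinearEquiv.ofBijective _ hS).apply_symm_apply x

/-- A bialgebra automorphism commutes with the antipode: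
`conv (S ∘ τ) τ = convOne`. -/
lemma conv_antipode_comp_tau (τ : H ≃ₐc[k] H) :
    conv k H (HopfAlgebra.antipode (R := k) (A := H) ∘ₗ (τ : H →ₗ[k] H)) (τ : H →ₗ[k] H)
      = convOne k H := by
  ext a
  rw [conv_apply]
  have hmapτ : TensorProduct.map (τ : H →ₗ[k] H) (τ : H →ₗ[k] H) (Coalgebra.comul a)
      = Coalgebra.comul (R := k) (τ a) := by
    have h := LinearMap.congr_fun
      (CoalgHomClass.map_comp_comul (F := H ≃ₐc[k] H) (R := k) τ) a
    simp only [LinearMap.comp_apply] at h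
    exact h
  have hdec : TensorProduct.map
        (HopfAlgebra.antipode (R := k) (A := H) ∘ₗ (τ : H →ₗ[k] H)) (τ : H →ₗ[k] H)
      = LinearMap.rTensor H (HopfAlgebra.antipode (R := k) (A := H)) ∘ₗ
          TensorProduct.map (τ : H →ₗ[k] H) (τ : H →ₗ[k] H) := by
    simp only [LinearMap.rTensor, ← TensorProduct.map_comp, LinearMap.id_comp]
  rw [hdec, LinearMap.comp_apply, hmapτ, HopfAlgebra.mul_antipode_rTensor_comul_apply]
  rw [convOne_apply]
  congr 1
  have h := LinearMap.congr_fun (CoalgHomClass.counit_comp (F := H ≃ₐc[k] H) (R := k) τ) a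
  simp only [LinearMap.comp_apply] at h
  exact h

lemma conv_tau_tau_comp_antipode (τ : H ≃ₐc[k] H) :
    conv k H (τ : H →ₗ[k] H) ((τ : H →ₗ[k] H) ∘ₗ HopfAlgebra.antipode (R := k) (A := H))
      = convOne k H := by
  ext a
  rw [conv_apply]
  have hdec : TensorProduct.map (τ : H →ₗ[k] H)
        ((τ : H →ₗ[k] H) ∘ₗ HopfAlgebra.antipode (R := k) (A := H))
      = TensorProduct.map (τ : H →ₗ[k] H) (τ : H →ₗ[k] H) ∘ₗ
          LinearMap.lTensor H (HopfAlgebra.antipode (R := k) (A := H)) := by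
    simp only [LinearMap.lTensor, ← TensorProduct.map_comp, LinearMap.comp_id]
  have hmul_map : ∀ x : H ⊗[k] H,
      LinearMap.mul' k H (TensorProduct.map (τ : H →ₗ[k] H) (τ : H →ₗ[k] H) x)
        = τ (LinearMap.mul' k H x) := by
    intro x
    induction x using TensorProduct.induction_on with
    | zero => simp
    | tmul x y => simp [map_mul]
    | add x y hx hy => simp only [map_add, hx, hy]
  rw [hdec, LinearMap.comp_apply, hmul_map, HopfAlgebra.mul_antipode_lTensor_comul_apply]
  rw [convOne_apply]
  exact AlgHomClass.commutes (F := H ≃ₐc[k] H) τ (Coalgebra.counit a)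

lemma antipode_comp_tau_comm (τ : H ≃ₐc[k] H) :
    HopfAlgebra.antipode (R := k) (A := H) ∘ₗ (τ : H →ₗ[k] H)
      = (τ : H →ₗ[k] H) ∘ₗ HopfAlgebra.antipode (R := k) (A := H) :=
  conv_unique (conv_antipode_comp_tau τ) (conv_tau_tau_comp_antipode τ)

lemma antipodeInv_comp_tau_comm (τ : H ≃ₐc[k] H)
    (hS : Function.Bijective (HopfAlgebra.antipode (R := k) (A := H))) :
    antipodeInv k H hS ∘ₗ (τ : H →ₗ[k] H) = (τ : H →ₗ[k] H) ∘ₗ antipodeInv k H hS := by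
  ext x
  apply hS.injective
  have h1 := LinearMap.congr_fun (comp_antipodeInv hS) ((τ : H →ₗ[k] H) x)
  have h2 := LinearMap.congr_fun (antipode_comp_tau_comm τ) (antipodeInv k H hS x)
  have h3 := LinearMap.congr_fun (comp_antipodeInv hS) x
  simp only [LinearMap.comp_apply, LinearMap.id_apply] at h1 h2 h3 ⊢
  rw [h1, h2, h3]

end ConvLemmas

/-! ### Transport along the duality -/

section Transfer

variable {k H H' : Type*} [Field k] [Ring H] [HopfAlgebra k H] [Ring H'] [HopfAlgebra k H']

/-- Transport of an endomorphism of `H` to an endomorphism of `H'` via the transpose. -/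
def Dmap (Φ : H' ≃ₗ[k] Module.Dual k H) (A : H →ₗ[k] H) : H' →ₗ[k] H' :=
  Φ.symm.toLinearMap ∘ₗ A.dualMap ∘ₗ Φ.toLinearMap

variable (Φ : H' ≃ₗ[k] Module.Dual k H)

lemma Phi_Dmap (A : H →ₗ[k] H) (a : H') : Φ (Dmap Φ A a) = A.dualMap (Φ a) := by
  simp [Dmap]

lemma Dmap_injective : Function.Injective (Dmap Φ) := by
  intro A B hAB
  have hdual : ∀ φ : Module.Dual k H, A.dualMap φ = B.dualMap φ := by
    intro φ
    have h := congrArg (fun T : H' →ₗ[k] H' => Φ (T (Φ.symm φ))) hAB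
    simpa [Phi_Dmap, Φ.apply_symm_apply] using h
  ext x
  have hz : ∀ φ : Module.Dual k H, φ (A x - B x) = 0 := by
    intro φ
    have h := LinearMap.congr_fun (hdual φ) x
    simp only [LinearMap.dualMap_apply] at h
    simp [map_sub, h]
  have := (Module.forall_dual_apply_eq_zero_iff k (A x - B x)).mp hz
  exact sub_eq_zero.mp this

lemma Dmap_id : Dmap Φ LinearMap.id = LinearMap.id := by
  ext a
  apply Φ.injective
  rw [Phi_Dmap]
  simp

lemma Dmap_comp (A B : H →ₗ[k] H) : Dmap Φ (A ∘ₗ B) = Dmap Φ B ∘ₗ Dmap Φ A := by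
  ext a
  apply Φ.injective
  simp only [LinearMap.comp_apply, Phi_Dmap]
  rfl

lemma Dmap_pow (T : H →ₗ[k] H) (m : ℕ) : Dmap Φ (T ^ m) = (Dmap Φ T) ^ m := by
  induction m with
  | zero =>
    rw [pow_zero, pow_zero]
    simpa [Module.End.one_eq_id] using Dmap_id Φ
  | succ m ih =>
    rw [pow_succ, pow_succ', Module.End.mul_eq_comp, Module.End.mul_eq_comp, Dmap_comp, ih]

variable (hone : Φ 1 = Coalgebra.counit (R := k) (A := H))
variable (hcounit : ∀ a : H', Coalgebra.counit (R := k) a = Φ a 1)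

include hone hcounit in
lemma Dmap_convOne : Dmap Φ (convOne k H) = convOne k H' := by
  ext a
  apply Φ.injective
  rw [Phi_Dmap]
  ext x
  rw [LinearMap.dualMap_apply, convOne_apply, Algebra.algebraMap_eq_smul_one, map_smul,
    convOne_apply, Algebra.algebraMap_eq_smul_one, map_smul]
  rw [LinearMap.smul_apply, hone, hcounit a]
  simp only [smul_eq_mul]
  ring

lemma dualDistrib_nat (A B : H →ₗ[k] H) :
    TensorProduct.dualDistrib k H H ∘ₗ TensorProduct.map A.dualMap B.dualMap
      = (TensorProduct.map A B).dualMap ∘ₗ TensorProduct.dualDistrib k H H := by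
  apply TensorProduct.ext'
  intro φ ψ
  simp only [LinearMap.comp_apply, TensorProduct.map_tmul]
  apply TensorProduct.ext'
  intro x y
  simp [TensorProduct.dualDistrib_apply]

variable (hmul : ∀ a b : H', Φ (a * b) =
      (Coalgebra.comul (R := k) (A := H)).dualMap
        (TensorProduct.dualDistrib k H H (Φ a ⊗ₜ[k] Φ b)))
variable (hcomul : ∀ a : H',
      TensorProduct.dualDistrib k H H
        (TensorProduct.map Φ.toLinearMap Φ.toLinearMap (Coalgebra.comul (R := k) a)) =
      (LinearMap.mul' k H).dualMap (Φ a))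

include hmul hcomul in
lemma Dmap_conv (A B : H →ₗ[k] H) :
    Dmap Φ (conv k H A B) = conv k H' (Dmap Φ A) (Dmap Φ B) := by
  have hmulMap : Φ.toLinearMap ∘ₗ LinearMap.mul' k H' =
      (Coalgebra.comul (R := k) (A := H)).dualMap ∘ₗ TensorProduct.dualDistrib k H H ∘ₗ
        TensorProduct.map Φ.toLinearMap Φ.toLinearMap := by
    apply TensorProduct.ext'
    intro a b
    simpa using hmul a b
  have step2 : TensorProduct.map Φ.toLinearMap Φ.toLinearMap ∘ₗ
        TensorProduct.map (Dmap Φ A) (Dmap Φ B)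
      = TensorProduct.map A.dualMap B.dualMap ∘ₗ
          TensorProduct.map Φ.toLinearMap Φ.toLinearMap := by
    rw [← TensorProduct.map_comp, ← TensorProduct.map_comp]
    congr 1 <;> (ext x; simp [Phi_Dmap])
  ext a
  apply Φ.injective
  rw [Phi_Dmap, conv_apply]
  have step1 := LinearMap.congr_fun hmulMap
    (TensorProduct.map (Dmap Φ A) (Dmap Φ B) (Coalgebra.comul a))
  simp only [LinearMap.comp_apply, LinearEquiv.coe_coe] at step1
  have step2' := LinearMap.congr_fun step2 (Coalgebra.comul (R := k) a)
  simp only [LinearMap.comp_apply] at step2'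
  have nat := LinearMap.congr_fun (dualDistrib_nat A B)
    (TensorProduct.map Φ.toLinearMap Φ.toLinearMap (Coalgebra.comul (R := k) a))
  simp only [LinearMap.comp_apply] at nat
  rw [step1, step2', nat, hcomul a]
  ext x
  simp [conv, LinearMap.dualMap_apply]

variable {hS : Function.Bijective (HopfAlgebra.antipode (R := k) (A := H))}
variable {hS' : Function.Bijective (HopfAlgebra.antipode (R := k) (A := H'))}

include hone hcounit hmul hcomul in
lemma antipode_transfer :
    HopfAlgebra.antipode (R := k) (A := H')
      = Dmap Φ (HopfAlgebra.antipode (R := k) (A := H)) := by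
  apply conv_unique (b := LinearMap.id)
  · exact conv_antipode_id
  · calc conv k H' LinearMap.id (Dmap Φ (HopfAlgebra.antipode (R := k) (A := H)))
        = conv k H' (Dmap Φ LinearMap.id)
            (Dmap Φ (HopfAlgebra.antipode (R := k) (A := H))) := by rw [Dmap_id]
      _ = Dmap Φ (conv k H LinearMap.id (HopfAlgebra.antipode (R := k) (A := H))) :=
          (Dmap_conv Φ hmul hcomul _ _).symm
      _ = Dmap Φ (convOne k H) := by rw [conv_id_antipode]
      _ = convOne k H' := Dmap_convOne Φ hone hcounit

include hone hcounit hmul hcomul in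
lemma antipodeInv_transfer (hS : Function.Bijective (HopfAlgebra.antipode (R := k) (A := H)))
    (hS' : Function.Bijective (HopfAlgebra.antipode (R := k) (A := H'))) :
    antipodeInv k H' hS' = Dmap Φ (antipodeInv k H hS) := by
  have hA := antipode_transfer Φ hone hcounit hmul hcomul
  have h1 : HopfAlgebra.antipode (R := k) (A := H') ∘ₗ Dmap Φ (antipodeInv k H hS)
      = LinearMap.id := by
    rw [hA, ← Dmap_comp, antipodeInv_comp, Dmap_id]
  calc antipodeInv k H' hS'
      = antipodeInv k H' hS' ∘ₗ (HopfAlgebra.antipode (R := k) (A := H') ∘ₗ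
          Dmap Φ (antipodeInv k H hS)) := by rw [h1, LinearMap.comp_id]
    _ = (antipodeInv k H' hS' ∘ₗ HopfAlgebra.antipode (R := k) (A := H')) ∘ₗ
          Dmap Φ (antipodeInv k H hS) := by rw [LinearMap.comp_assoc]
    _ = Dmap Φ (antipodeInv k H hS) := by rw [antipodeInv_comp, LinearMap.id_comp]

end Transfer

end TwistedExponent

/-- Let `H` be a finite-dimensional Hopf algebra over a field `k` and `τ` a
Hopf algebra automorphism of `H` of finite order `r`.  Then the twisted exponent of the dual
Hopf algebra `H*` with respect to the dual automorphism `τ*` equals `exp_τ(H)`.  (The dual Hopf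
algebra is encoded as a Hopf algebra `H'` with a linear equivalence `Φ : H' ≃ H* = Dual k H`
under which the unit of `H'` is `ε`, multiplication is convolution (the transpose of `Δ`),
the counit is evaluation at `1`, comultiplication is the transpose of `μ`, and `τ'` corresponds
to the transpose `τ*` of `τ`; both exponents may be infinite, equality meaning that the same
positive integers `n` satisfy the defining condition `Γ_{nr} = ε·1`.) -/
theorem stmt11 {k H H' : Type*} [Field k] [Ring H] [HopfAlgebra k H] [FiniteDimensional k H]
    [Ring H'] [HopfAlgebra k H']
    (hS : Function.Bijective (HopfAlgebra.antipode (R := k) (A := H)))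
    (hS' : Function.Bijective (HopfAlgebra.antipode (R := k) (A := H')))
    (τ : H ≃ₐc[k] H) (r : ℕ) (hr : HasOrder H (⇑τ) r)
    (Φ : H' ≃ₗ[k] Module.Dual k H)
    (hone : Φ 1 = Coalgebra.counit (R := k) (A := H))
    (hmul : ∀ a b : H', Φ (a * b) =
      (Coalgebra.comul (R := k) (A := H)).dualMap
        (TensorProduct.dualDistrib k H H (Φ a ⊗ₜ[k] Φ b)))
    (hcounit : ∀ a : H', Coalgebra.counit (R := k) a = Φ a 1)
    (hcomul : ∀ a : H',
      TensorProduct.dualDistrib k H H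
        (TensorProduct.map Φ.toLinearMap Φ.toLinearMap (Coalgebra.comul (R := k) a)) =
      (LinearMap.mul' k H).dualMap (Φ a))
    (τ' : H' ≃ₐc[k] H')
    (hτ' : ∀ a : H', Φ (τ' a) = (τ : H →ₗ[k] H).dualMap (Φ a)) :
    ∀ n : ℕ, 0 < n →
      (gamma k H (twist k H hS (τ : H →ₗ[k] H)) (n * r) = convOne k H ↔
        gamma k H' (twist k H' hS' (τ' : H' →ₗ[k] H')) (n * r) = convOne k H') := by
  -- transport of the twist map
  have hτ'' : (τ' : H' →ₗ[k] H') = Dmap Φ (τ : H →ₗ[k] H) := by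
    ext a
    apply Φ.injective
    rw [Phi_Dmap]
    simpa using hτ' a
  have hSinv := antipodeInv_transfer Φ hone hcounit hmul hcomul hS hS'
  have htwist : twist k H' hS' (τ' : H' →ₗ[k] H')
      = Dmap Φ (twist k H hS (τ : H →ₗ[k] H)) := by
    rw [twist, twist, hτ'', hSinv, ← Dmap_comp, ← Dmap_comp]
    congr 1
    have hc := antipodeInv_comp_tau_comm τ hS
    rw [← hc, LinearMap.comp_assoc, ← hc]
  -- transport of gamma
  have hgamma : ∀ m : ℕ, gamma k H' (twist k H' hS' (τ' : H' →ₗ[k] H')) m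
      = Dmap Φ (gamma k H (twist k H hS (τ : H →ₗ[k] H)) m) := by
    intro m
    induction m with
    | zero => exact (Dmap_convOne Φ hone hcounit).symm
    | succ m ih =>
      show conv k H' _ _ = _
      rw [ih, htwist, ← Dmap_pow, ← Dmap_conv Φ hmul hcomul]
      rfl
  intro n _
  rw [hgamma (n * r)]
  constructor
  · intro h
    rw [h]
    exact Dmap_convOne Φ hone hcounit
  · intro h
    exact Dmap_injective Φ (h.trans (Dmap_convOne Φ hone hcounit).symm)
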